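/- arXiv:math/9606228 — 4 statements merged into one kernel-verified Lean document; each statement's English description precedes it below -/
import Mathlib

section
/- For any poset P and any set S ⊆ P, the relation ≤ on R_S(P) is reflexive, transitive, and antisymmetric; that is, R_S(P) is a partially ordered set. -/
/-- Restriction `η↾k` of `η ∈ 2^ω` to its first `k` entries, as a finite binary sequence. -/
def restrict (η : ℕ → Bool) (k : ℕ) : List Bool := List.ofFn (fun i : Fin k => η i)

/-- `J ⊆ 2^{<ω}` contains a front above `ν`: every branch of Cantor space extending `ν`
has a restriction belonging to `J`. -/
def FrontAbove (J : Set (List Bool)) (ν : List Bool) : Prop :=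
  ∀ η : ℕ → Bool, restrict η ν.length = ν → ∃ k : ℕ, restrict η k ∈ J

/-- Compatibility in a forcing notion: a common upper bound exists. -/
def PCompat {P : Type} (le : P → P → Prop) (p q : P) : Prop :=
  ∃ r, le p r ∧ le q r

/-- Conditions of the forcing notion `R_S(P)`: pairs `⟨h, w⟩` where `h` is a finite partial
function from `S` to `2^{<ω}` such that compatible elements of `dom h` are comparable and
`h` is monotone (with respect to end-extension), and `w` is a finite subset of `P`. -/
structure RCond (P : Type) [PartialOrder P] (S : Set P) where
  /-- the finite partial function, coded with values in `Option (List Bool)` -/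
  h : P → Option (List Bool)
  /-- the finite side set -/
  w : Finset P
  dom_finite : {p : P | h p ≠ none}.Finite
  dom_subset : ∀ p : P, h p ≠ none → p ∈ S
  dom_comparable : ∀ p₁ p₂ : P, h p₁ ≠ none → h p₂ ≠ none →
    PCompat (· ≤ ·) p₁ p₂ → p₁ ≤ p₂ ∨ p₂ ≤ p₁
  mono : ∀ (p₁ p₂ : P) (ν₁ ν₂ : List Bool),
    h p₁ = some ν₁ → h p₂ = some ν₂ → p₁ ≤ p₂ → ν₁ <+: ν₂

/-- The order of `R_S(P)`. -/
def RCond.le {P : Type} [PartialOrder P] {S : Set P} (r₁ r₂ : RCond P S) : Prop :=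
  (∀ (p : P) (ν : List Bool), r₁.h p = some ν → r₂.h p = some ν) ∧
  r₁.w ⊆ r₂.w ∧
  ∀ q ∈ r₁.w, ∀ (p : P) (ν : List Bool), r₁.h p = some ν →
    PCompat (· ≤ ·) p q →
    (¬ ∃ p' : P, r₁.h p' ≠ none ∧ p ≤ p' ∧ p ≠ p' ∧ PCompat (· ≤ ·) p' q) →
    FrontAbove
      {μ : List Bool | ∃ p₁ : P, r₂.h p₁ = some μ ∧ p ≤ p₁ ∧ PCompat (· ≤ ·) p₁ q ∧
        ∀ p₂ : P, r₂.h p₂ ≠ none → p₁ ≤ p₂ → p₁ ≠ p₂ → ¬ PCompat (· ≤ ·) p₂ q} ν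

/-- For any poset `P` and any `S ⊆ P`, the relation `≤` on `R_S(P)` is reflexive,
transitive and antisymmetric, i.e. `R_S(P)` is a partially ordered set. -/
theorem rcond_partial_order (P : Type) [PartialOrder P] (S : Set P) :
    (∀ r : RCond P S, RCond.le r r) ∧
    (∀ r₁ r₂ r₃ : RCond P S, RCond.le r₁ r₂ → RCond.le r₂ r₃ → RCond.le r₁ r₃) ∧
    (∀ r₁ r₂ : RCond P S, RCond.le r₁ r₂ → RCond.le r₂ r₁ → r₁ = r₂) := by
  refine ⟨?_, ?_, ?_⟩
  · -- reflexivity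
    intro r
    refine ⟨fun p ν h => h, subset_rfl, ?_⟩
    intro q hq p ν hp hpq hmax η hη
    refine ⟨ν.length, ?_⟩
    rw [hη]
    refine ⟨p, hp, le_rfl, hpq, ?_⟩
    intro p₂ hp₂ hle hne hcomp
    exact hmax ⟨p₂, hp₂, hle, hne, hcomp⟩
  · -- transitivity
    rintro r₁ r₂ r₃ ⟨h12, w12, f12⟩ ⟨h23, w23, f23⟩
    refine ⟨fun p ν h => h23 p ν (h12 p ν h), w12.trans w23, ?_⟩
    intro q hq p ν hp hpq hmax η hη
    obtain ⟨k, p₁, hμ2, hpp₁, hp₁q, hp₁max⟩ := f12 q hq p ν hp hpq hmax η hη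
    have hlen : (restrict η k).length = k := by simp [restrict]
    have hμη : restrict η (restrict η k).length = restrict η k := by rw [hlen]
    obtain ⟨k', p₁', h3, hle', hq', hmax'⟩ :=
      f23 q (w12 hq) p₁ (restrict η k) hμ2 hp₁q
        (fun ⟨p', hne, hle, hneq, hc⟩ => hp₁max p' hne hle hneq hc) η hμη
    exact ⟨k', p₁', h3, le_trans hpp₁ hle', hq', hmax'⟩
  · -- antisymmetry
    rintro r₁ r₂ ⟨h12, w12, -⟩ ⟨h21, w21, -⟩
    obtain ⟨h₁, w₁, d₁, s₁, c₁, m₁⟩ := r₁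
    obtain ⟨h₂, w₂, d₂, s₂, c₂, m₂⟩ := r₂
    have hh : h₁ = h₂ := by
      funext p
      cases e₁ : h₁ p with
      | some ν => exact (h12 p ν e₁).symm
      | none =>
        cases e₂ : h₂ p with
        | some ν => exact nomatch (e₁.symm.trans (h21 p ν e₂))
        | none => rfl
    have hw : w₁ = w₂ := subset_antisymm w12 w21
    subst hh hw
    rfl
end

section
/- For any poset P and any countable set S ⊆ P, the forcing notion R_S(P) is σ-centered; in fact, any finite set of conditions of R_S(P) all having the same first coordinate h has a common upper bound. -/
/-- A forcing notion is σ-centered if it is the union of countably many centered subsets,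
where a subset is centered if each of its finite subsets has a common upper bound. -/
def PSigmaCentered {P : Type} (le : P → P → Prop) : Prop :=
  ∃ C : ℕ → Set P, (∀ p, ∃ n, p ∈ C n) ∧
    ∀ n, ∀ F : Finset P, ↑F ⊆ C n → ∃ r, ∀ p ∈ F, le p r

/-- For a countable `S ⊆ P`: any finite set of conditions of `R_S(P)` having the same first
coordinate `h` has a common upper bound, and consequently `R_S(P)` is σ-centered. -/
theorem rcond_sigma_centered (P : Type) [PartialOrder P] (S : Set P) (hS : S.Countable) :
    (∀ F : Finset (RCond P S),
        (∀ r₁ ∈ F, ∀ r₂ ∈ F, r₁.h = r₂.h) → ∃ r : RCond P S, ∀ r' ∈ F, RCond.le r' r) ∧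
      PSigmaCentered (RCond.le (P := P) (S := S)) := by

  classical
  have key : ∀ F : Finset (RCond P S),
      (∀ r₁ ∈ F, ∀ r₂ ∈ F, r₁.h = r₂.h) → ∃ r : RCond P S, ∀ r' ∈ F, RCond.le r' r := by
    intro F hF
    rcases F.eq_empty_or_nonempty with rfl | ⟨r₀, hr₀⟩
    · refine ⟨⟨fun _ => none, ∅, by simp, by simp, by simp, by simp⟩, by simp⟩
    · refine ⟨⟨r₀.h, F.sup RCond.w, r₀.dom_finite, r₀.dom_subset, r₀.dom_comparable,
        r₀.mono⟩, ?_⟩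
      intro r' hr'
      have hh : r'.h = r₀.h := hF r' hr' r₀ hr₀
      refine ⟨?_, ?_, ?_⟩
      · intro p ν hp; rw [hh] at hp; exact hp
      · exact Finset.le_sup (f := RCond.w) hr'
      · intro q hq p ν hpν hcompat hmax η hη
        refine ⟨ν.length, ?_⟩
        rw [hη]
        refine ⟨p, ?_, le_refl p, hcompat, ?_⟩
        · show r₀.h p = some ν; rw [← hh]; exact hpν
        · intro p₂ h₂ hle hne hc
          exact hmax ⟨p₂, by rw [hh]; exact h₂, hle, hne, hc⟩
  refine ⟨key, ?_⟩
  -- the trivial condition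
  have rtriv : RCond P S := ⟨fun _ => none, ∅, by simp, by simp, by simp, by simp⟩
  set A : Set (P → Option (List Bool)) := {g | ∃ r : RCond P S, r.h = g} with hA_def
  set Φ : (P → Option (List Bool)) → Set (P × List Bool) :=
    fun g => {x | g x.1 = some x.2} with hΦ_def
  have hΦinj : Function.Injective Φ := by
    intro g₁ g₂ hΦ
    funext p
    have hiff : ∀ ν : List Bool, g₁ p = some ν ↔ g₂ p = some ν := by
      intro ν
      have := Set.ext_iff.1 hΦ (p, ν)
      simpa [hΦ_def] using this
    cases h1 : g₁ p with
    | some ν => exact ((hiff ν).1 h1).symm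
    | none =>
      cases h2 : g₂ p with
      | some ν => exact absurd ((hiff ν).2 h2) (by simp [h1])
      | none => rfl
  have hB : {t : Set (P × List Bool) | t.Finite ∧ t ⊆ S ×ˢ (Set.univ : Set (List Bool))}.Countable :=
    Set.countable_setOf_finite_subset (hS.prod Set.countable_univ)
  have hAB : A ⊆ Φ ⁻¹' {t | t.Finite ∧ t ⊆ S ×ˢ (Set.univ : Set (List Bool))} := by
    rintro g ⟨r, rfl⟩
    constructor
    · apply Set.Finite.of_finite_image (f := Prod.fst)
      · apply r.dom_finite.subset
        rintro p ⟨⟨p', ν⟩, hmem, rfl⟩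
        simp only [hΦ_def, Set.mem_setOf_eq] at hmem
        simp [hmem]
      · rintro ⟨p₁, ν₁⟩ h₁ ⟨p₂, ν₂⟩ h₂ (hfst : p₁ = p₂)
        subst hfst
        simp only [hΦ_def, Set.mem_setOf_eq] at h₁ h₂
        rw [h₁] at h₂
        have : ν₁ = ν₂ := by simpa using h₂
        rw [this]
    · rintro ⟨p, ν⟩ hmem
      simp only [hΦ_def, Set.mem_setOf_eq] at hmem
      exact ⟨r.dom_subset p (by simp [hmem]), trivial⟩
  have hAc : A.Countable := ((hB.preimage hΦinj).mono hAB)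
  obtain ⟨f, hf⟩ := hAc.exists_eq_range ⟨rtriv.h, ⟨rtriv, rfl⟩⟩
  refine ⟨fun n => {r : RCond P S | r.h = f n}, ?_, ?_⟩
  · intro r
    have : r.h ∈ A := ⟨r, rfl⟩
    rw [hf] at this
    obtain ⟨n, hn⟩ := this
    exact ⟨n, hn.symm⟩
  · intro n F hF
    exact key F (fun r₁ h₁ r₂ h₂ => by
      have e₁ := hF h₁; have e₂ := hF h₂
      simp only [Set.mem_setOf_eq] at e₁ e₂
      rw [e₁, e₂])
end

section
/- Let P be a separative atomless poset. For every p ∈ P, the set I⁰_p = { ⟨h,w⟩ ∈ R_P(P) : for every q ∈ w that is compatible with p there is p′ ∈ dom(h) with p ≤ p′ and p′ compatible with q } is dense in R_P(P). -/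
/-- A set `D` is dense in a forcing notion if every condition has an upper bound in `D`. -/
def PDense {P : Type} (le : P → P → Prop) (D : Set P) : Prop :=
  ∀ p : P, ∃ q ∈ D, le p q

/-- A poset is atomless if every element has two incompatible extensions. -/
def Atomless (P : Type) [PartialOrder P] : Prop :=
  ∀ p : P, ∃ q₁ q₂ : P, p ≤ q₁ ∧ p ≤ q₂ ∧ ¬ PCompat (· ≤ ·) q₁ q₂

/-- A poset is separative if whenever `p ≰ q` there is `r ≥ q` incompatible with `p`. -/
def Separative (P : Type) [PartialOrder P] : Prop :=
  ∀ p q : P, ¬ p ≤ q → ∃ r : P, q ≤ r ∧ ¬ PCompat (· ≤ ·) p r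

section Aux

variable {P : Type} [PartialOrder P]

lemma pcompat_symm {y x : P} (h : PCompat (· ≤ ·) y x) : PCompat (· ≤ ·) x y := by
  obtain ⟨r, h1, h2⟩ := h; exact ⟨r, h2, h1⟩

lemma pcompat_mono {a b c : P} (hab : a ≤ b) (h : PCompat (· ≤ ·) b c) :
    PCompat (· ≤ ·) a c := by
  obtain ⟨r, h1, h2⟩ := h; exact ⟨r, le_trans hab h1, h2⟩

lemma sep_lemma (hsep : Separative P) (A : Finset P) (s : P) :
    ∃ t, s ≤ t ∧ ∀ y ∈ A, y ≤ t ∨ ¬ PCompat (· ≤ ·) y t := by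
  classical
  induction A using Finset.induction with
  | empty => exact ⟨s, le_refl s, by simp⟩
  | @insert a A ha ih =>
    obtain ⟨t, hst, ht⟩ := ih
    by_cases hat : a ≤ t
    · refine ⟨t, hst, ?_⟩
      intro y hy
      rcases Finset.mem_insert.mp hy with rfl | hy
      · exact Or.inl hat
      · exact ht y hy
    · obtain ⟨t', htt', ht'⟩ := hsep a t hat
      refine ⟨t', le_trans hst htt', ?_⟩
      intro y hy
      rcases Finset.mem_insert.mp hy with rfl | hy
      · exact Or.inr ht'
      · rcases ht y hy with h | h
        · exact Or.inl (le_trans h htt')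
        · refine Or.inr (fun hc => h ?_)
          obtain ⟨u, h1, h2⟩ := hc
          exact ⟨u, h1, le_trans htt' h2⟩

/-- `r'` extends `r` as a partial function. -/
def RExt (r r' : RCond P Set.univ) : Prop :=
  ∀ (x : P) (ν : List Bool), r.h x = some ν → r'.h x = some ν

/-- The invariant maintained while extending a condition. -/
def RInv (r r' : RCond P Set.univ) : Prop :=
  RExt r r' ∧ r'.w = r.w ∧
  ∀ x : P, r'.h x ≠ none → r.h x = none →
    ∀ (p₀ : P) (ν : List Bool) (q' : P), r.h p₀ = some ν → p₀ ≤ x →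
      PCompat (· ≤ ·) x q' →
      (¬ ∃ p' : P, r.h p' ≠ none ∧ p₀ ≤ p' ∧ p₀ ≠ p' ∧ PCompat (· ≤ ·) p' q') →
      r'.h x = some ν

lemma rinv_refl (r : RCond P Set.univ) : RInv r r :=
  ⟨fun _ _ h => h, rfl, fun x hx hx' => absurd hx' hx⟩

lemma exists_chain_max (r' : RCond P Set.univ) (t : P)
    (hne : ∃ y, r'.h y ≠ none ∧ y ≤ t) :
    ∃ m, r'.h m ≠ none ∧ m ≤ t ∧ ∀ y, r'.h y ≠ none → y ≤ t → y ≤ m := by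
  classical
  set B : Finset P := r'.dom_finite.toFinset.filter (fun y => y ≤ t) with hB
  have hmemB : ∀ y, y ∈ B ↔ (r'.h y ≠ none ∧ y ≤ t) := by
    intro y
    simp [hB, Finset.mem_filter, Set.Finite.mem_toFinset]
  obtain ⟨y₀, hy₀⟩ := hne
  have hBne : B.Nonempty := ⟨y₀, (hmemB y₀).mpr hy₀⟩
  obtain ⟨m, hmB, hmax⟩ := B.exists_maximal hBne
  obtain ⟨hmdom, hmt⟩ := (hmemB m).mp hmB
  refine ⟨m, hmdom, hmt, ?_⟩
  intro y hy hyt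
  have hyB : y ∈ B := (hmemB y).mpr ⟨hy, hyt⟩
  have hcmp := r'.dom_comparable y m hy hmdom ⟨t, hyt, hmt⟩
  rcases hcmp with h | h
  · exact h
  · rcases eq_or_lt_of_le h with h' | h'
    · exact le_of_eq h'.symm
    · exact absurd (lt_of_lt_of_le h' (hmax hyB h'.le)) (lt_irrefl m)

lemma extend_cond (r r' : RCond P Set.univ) (hinv : RInv r r') (t : P)
    (htdom : r'.h t = none)
    (hsept : ∀ y, r'.h y ≠ none → y ≤ t ∨ ¬ PCompat (· ≤ ·) y t)
    (μ : List Bool)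
    (hmono : ∀ (y : P) (ν : List Bool), r'.h y = some ν → y ≤ t → ν <+: μ)
    (hval : ∀ (p₀ : P) (ν : List Bool) (q' : P), r.h p₀ = some ν → p₀ ≤ t →
      PCompat (· ≤ ·) t q' →
      (¬ ∃ p' : P, r.h p' ≠ none ∧ p₀ ≤ p' ∧ p₀ ≠ p' ∧ PCompat (· ≤ ·) p' q') →
      ν = μ) :
    ∃ r'' : RCond P Set.univ, RInv r r'' ∧ RExt r' r'' ∧ r''.h t = some μ := by
  classical
  refine ⟨⟨Function.update r'.h t (some μ), r'.w, ?_, ?_, ?_, ?_⟩, ?_, ?_, ?_⟩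
  · -- dom_finite
    apply (r'.dom_finite.insert t).subset
    intro x hx
    by_cases hxt : x = t
    · exact Set.mem_insert_iff.mpr (Or.inl hxt)
    · refine Set.mem_insert_iff.mpr (Or.inr ?_)
      simpa [Function.update_apply, hxt] using hx
  · intro x _; exact Set.mem_univ x
  · -- dom_comparable
    intro p₁ p₂ h1 h2 hc
    by_cases e1 : p₁ = t <;> by_cases e2 : p₂ = t
    · subst e1; subst e2; exact Or.inl le_rfl
    · subst e1
      have h2' : r'.h p₂ ≠ none := by simpa [Function.update_apply, e2] using h2
      rcases hsept p₂ h2' with h | h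
      · exact Or.inr h
      · exact absurd (pcompat_symm hc) h
    · subst e2
      have h1' : r'.h p₁ ≠ none := by simpa [Function.update_apply, e1] using h1
      rcases hsept p₁ h1' with h | h
      · exact Or.inl h
      · exact absurd hc h
    · have h1' : r'.h p₁ ≠ none := by simpa [Function.update_apply, e1] using h1
      have h2' : r'.h p₂ ≠ none := by simpa [Function.update_apply, e2] using h2
      exact r'.dom_comparable p₁ p₂ h1' h2' hc
  · -- mono
    intro p₁ p₂ ν₁ ν₂ h1 h2 hle
    by_cases e1 : p₁ = t <;> by_cases e2 : p₂ = t
    · subst e1; subst e2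
      have : ν₁ = ν₂ := by
        have := h1.symm.trans h2
        simpa using this
      exact this ▸ List.prefix_refl _
    · subst e1
      have h2' : r'.h p₂ = some ν₂ := by simpa [Function.update_apply, e2] using h2
      rcases hsept p₂ (by rw [h2']; exact Option.some_ne_none _) with h | h
      · exact absurd (le_antisymm h hle) e2
      · exact absurd ⟨p₂, le_refl p₂, hle⟩ h
    · subst e2
      have h1' : r'.h p₁ = some ν₁ := by simpa [Function.update_apply, e1] using h1
      have hν₂ : ν₂ = μ := by
        have := h2
        simp [Function.update_self] at this
        exact this.symm
      exact hν₂ ▸ hmono p₁ ν₁ h1' hle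
    · have h1' : r'.h p₁ = some ν₁ := by simpa [Function.update_apply, e1] using h1
      have h2' : r'.h p₂ = some ν₂ := by simpa [Function.update_apply, e2] using h2
      exact r'.mono p₁ p₂ ν₁ ν₂ h1' h2' hle
  · -- RInv r r''
    obtain ⟨hext, hw, hD⟩ := hinv
    refine ⟨?_, hw, ?_⟩
    · intro x ν hx
      have hx' := hext x ν hx
      have hxt : x ≠ t := fun e => by rw [e, htdom] at hx'; cases hx'
      show Function.update r'.h t (some μ) x = some ν
      simpa [Function.update_apply, hxt] using hx'
    · intro x hx hnone p₀ ν q' h1 h2 h3 h4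
      by_cases hxt : x = t
      · rw [hxt] at h2 h3
        have hv := hval p₀ ν q' h1 h2 h3 h4
        show Function.update r'.h t (some μ) x = some ν
        rw [hxt, Function.update_self, hv]
      · have hx' : r'.h x ≠ none := by simpa [Function.update_apply, hxt] using hx
        have := hD x hx' hnone p₀ ν q' h1 h2 h3 h4
        show Function.update r'.h t (some μ) x = some ν
        simpa [Function.update_apply, hxt] using this
  · -- RExt r' r''
    intro x ν hx
    have hxt : x ≠ t := fun e => by rw [e, htdom] at hx; cases hx
    show Function.update r'.h t (some μ) x = some ν
    simpa [Function.update_apply, hxt] using hx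
  · show Function.update r'.h t (some μ) t = some μ
    simp [Function.update_self]

lemma step_lemma (hsep : Separative P) (p : P) (r r' : RCond P Set.univ)
    (hinv : RInv r r') (q : P) (hq : PCompat (· ≤ ·) q p) :
    ∃ r'' : RCond P Set.univ, RInv r r'' ∧ RExt r' r'' ∧
      ∃ (p' : P) (ν : List Bool), r''.h p' = some ν ∧ p ≤ p' ∧ PCompat (· ≤ ·) p' q := by
  classical
  obtain ⟨s, hqs, hps⟩ := hq
  obtain ⟨t, hst, htsep⟩ := sep_lemma hsep r'.dom_finite.toFinset s
  have hsept : ∀ y, r'.h y ≠ none → y ≤ t ∨ ¬ PCompat (· ≤ ·) y t := by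
    intro y hy
    exact htsep y (r'.dom_finite.mem_toFinset.mpr hy)
  have hpt : p ≤ t := le_trans hps hst
  have hqt : q ≤ t := le_trans hqs hst
  have hcompat_tq : PCompat (· ≤ ·) t q := ⟨t, le_refl t, hqt⟩
  by_cases htdom : r'.h t = none
  · by_cases hB : ∃ y, r'.h y ≠ none ∧ y ≤ t
    · obtain ⟨m, hmdom, hmt, hmax⟩ := exists_chain_max r' t hB
      obtain ⟨μ, hμ⟩ := Option.ne_none_iff_exists'.mp hmdom
      have hmono : ∀ (y : P) (ν : List Bool), r'.h y = some ν → y ≤ t → ν <+: μ := by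
        intro y ν hy hyt
        exact r'.mono y m ν μ hy hμ (hmax y (fun e => by rw [e] at hy; cases hy) hyt)
      have hval : ∀ (p₀ : P) (ν : List Bool) (q' : P), r.h p₀ = some ν → p₀ ≤ t →
          PCompat (· ≤ ·) t q' →
          (¬ ∃ p' : P, r.h p' ≠ none ∧ p₀ ≤ p' ∧ p₀ ≠ p' ∧ PCompat (· ≤ ·) p' q') →
          ν = μ := by
        intro p₀ ν q' h1 h2 h3 h4
        have hp₀' : r'.h p₀ = some ν := hinv.1 p₀ ν h1
        have hp₀m : p₀ ≤ m :=
          hmax p₀ (fun e => by rw [e] at hp₀'; cases hp₀') h2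
        have hcmq : PCompat (· ≤ ·) m q' := pcompat_mono hmt h3
        by_cases hrm : r.h m = none
        · have := hinv.2.2 m hmdom hrm p₀ ν q' h1 hp₀m hcmq h4
          rw [this] at hμ; exact (Option.some_injective _ hμ).symm ▸ rfl
        · have hmp₀ : m = p₀ := by
            by_contra hne
            exact h4 ⟨m, hrm, hp₀m, fun e => hne e.symm, hcmq⟩
          rw [hmp₀, hp₀'] at hμ
          exact Option.some_injective _ hμ
      obtain ⟨r'', hinv'', hext'', hμ''⟩ :=
        extend_cond r r' hinv t htdom hsept μ hmono hval
      exact ⟨r'', hinv'', hext'', t, μ, hμ'', hpt, hcompat_tq⟩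
    · have hmono : ∀ (y : P) (ν : List Bool), r'.h y = some ν → y ≤ t → ν <+: ([] : List Bool) := by
        intro y ν hy hyt
        exact absurd ⟨y, fun e => (by rw [e] at hy; cases hy), hyt⟩ hB
      have hval : ∀ (p₀ : P) (ν : List Bool) (q' : P), r.h p₀ = some ν → p₀ ≤ t →
          PCompat (· ≤ ·) t q' →
          (¬ ∃ p' : P, r.h p' ≠ none ∧ p₀ ≤ p' ∧ p₀ ≠ p' ∧ PCompat (· ≤ ·) p' q') →
          ν = ([] : List Bool) := by
        intro p₀ ν q' h1 h2 _ _
        have hp₀' : r'.h p₀ = some ν := hinv.1 p₀ ν h1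
        exact absurd ⟨p₀, fun e => (by rw [e] at hp₀'; cases hp₀'), h2⟩ hB
      obtain ⟨r'', hinv'', hext'', hμ''⟩ :=
        extend_cond r r' hinv t htdom hsept [] hmono hval
      exact ⟨r'', hinv'', hext'', t, [], hμ'', hpt, hcompat_tq⟩
  · obtain ⟨ν, hν⟩ := Option.ne_none_iff_exists'.mp htdom
    exact ⟨r', hinv, fun _ _ h => h, t, ν, hν, hpt, hcompat_tq⟩

lemma main_aux (hsep : Separative P) (p : P) (r : RCond P Set.univ) (Q : Finset P) :
    ∃ r' : RCond P Set.univ, RInv r r' ∧ ∀ q ∈ Q, PCompat (· ≤ ·) q p →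
      ∃ (p' : P) (ν : List Bool), r'.h p' = some ν ∧ p ≤ p' ∧ PCompat (· ≤ ·) p' q := by
  classical
  induction Q using Finset.induction with
  | empty => exact ⟨r, rinv_refl r, by simp⟩
  | @insert a Q ha ih =>
    obtain ⟨r', hinv, hwit⟩ := ih
    by_cases hap : PCompat (· ≤ ·) a p
    · obtain ⟨r'', hinv'', hext, p', ν, h1, h2, h3⟩ := step_lemma hsep p r r' hinv a hap
      refine ⟨r'', hinv'', ?_⟩
      intro q hq hqp
      rcases Finset.mem_insert.mp hq with rfl | hq
      · exact ⟨p', ν, h1, h2, h3⟩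
      · obtain ⟨p'', ν', g1, g2, g3⟩ := hwit q hq hqp
        exact ⟨p'', ν', hext p'' ν' g1, g2, g3⟩
    · refine ⟨r', hinv, ?_⟩
      intro q hq hqp
      rcases Finset.mem_insert.mp hq with rfl | hq
      · exact absurd hqp hap
      · exact hwit q hq hqp

lemma frontAbove_of_mem {J : Set (List Bool)} {ν : List Bool} (h : ν ∈ J) :
    FrontAbove J ν := by
  intro η hη
  exact ⟨ν.length, by rw [hη]; exact h⟩

end Aux

/-- For a separative atomless poset `P` and any `p ∈ P`, the set `I⁰_p` of conditions
`⟨h,w⟩` of `R_P(P)` such that every `q ∈ w` compatible with `p` admits some `p′ ∈ dom h`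
with `p ≤ p′` and `p′` compatible with `q`, is dense in `R_P(P)`. -/
theorem rcond_I0_dense (P : Type) [PartialOrder P]
    (hsep : Separative P) (hatomless : Atomless P) (p : P) :
    PDense (RCond.le (P := P) (S := Set.univ))
      {r : RCond P Set.univ |
        ∀ q ∈ r.w, PCompat (· ≤ ·) q p →
          ∃ (p' : P) (ν : List Bool), r.h p' = some ν ∧ p ≤ p' ∧ PCompat (· ≤ ·) p' q} := by
  classical
  intro r
  obtain ⟨r', hinv, hwit⟩ := main_aux hsep p r r.w
  obtain ⟨hext, hw, hD⟩ := hinv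
  refine ⟨r', ?_, ?_⟩
  · -- membership in the dense set
    intro q hq hqp
    exact hwit q (hw ▸ hq) hqp
  · -- r ≤ r'
    refine ⟨hext, by rw [hw], ?_⟩
    intro q hq p₀ ν hp₀ hcompat hmax
    apply frontAbove_of_mem
    set F : Finset P :=
      r'.dom_finite.toFinset.filter (fun x => p₀ ≤ x ∧ PCompat (· ≤ ·) x q) with hF
    have hmemF : ∀ x, x ∈ F ↔ (r'.h x ≠ none ∧ p₀ ≤ x ∧ PCompat (· ≤ ·) x q) := by
      intro x
      simp [hF, Finset.mem_filter, Set.Finite.mem_toFinset]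
    have hp₀' : r'.h p₀ = some ν := hext p₀ ν hp₀
    have hp₀F : p₀ ∈ F := (hmemF p₀).mpr
      ⟨fun e => (by rw [e] at hp₀'; cases hp₀'), le_refl p₀, hcompat⟩
    obtain ⟨p₁, hp₁F, hp₁max⟩ := F.exists_maximal ⟨p₀, hp₀F⟩
    obtain ⟨hp₁dom, hp₀p₁, hp₁q⟩ := (hmemF p₁).mp hp₁F
    have hp₁val : r'.h p₁ = some ν := by
      by_cases hr : r.h p₁ = none
      · exact hD p₁ hp₁dom hr p₀ ν q hp₀ hp₀p₁ hp₁q hmax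
      · have hp₁p₀ : p₁ = p₀ := by
          by_contra hne
          exact hmax ⟨p₁, hr, hp₀p₁, fun e => hne e.symm, hp₁q⟩
        rw [hp₁p₀]; exact hp₀'
    refine ⟨p₁, hp₁val, hp₀p₁, hp₁q, ?_⟩
    intro p₂ hp₂dom hle hne hc
    have hp₂F : p₂ ∈ F := (hmemF p₂).mpr ⟨hp₂dom, le_trans hp₀p₁ hle, hc⟩
    exact hne (le_antisymm hle (hp₁max hp₂F hle))
end

section
/- Let P be a separative atomless poset, r₀ = ⟨h₀,w₀⟩ ∈ R_P(P) and m ∈ ω. Then the set I²_{r₀,m} = { r = ⟨h,w⟩ ∈ R_P(P) : either r is incompatible with r₀ in R_P(P), or for every q ∈ w₀, every p ∈ dom(h₀) such that p is compatible with q and no p′ ∈ dom(h₀) with p ≤ p′ and p ≠ p′ is compatible with q, and every ν ∈ 2^m with h₀(p) ⊆ ν, there is p″ ∈ dom(h) with p ≤ p″, p″ compatible with q, and ν ⊆ h(p″) } is dense in R_P(P). -/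
@[simp] lemma restrict_length (η : ℕ → Bool) (k : ℕ) : (restrict η k).length = k :=
  List.length_ofFn

lemma restrict_take (η : ℕ → Bool) {k k' : ℕ} (h : k ≤ k') :
    (restrict η k').take k = restrict η k := by
  apply List.ext_getElem
  · simp [restrict, h]
  · intro i h1 h2
    simp [restrict]

lemma restrict_prefix (η : ℕ → Bool) {k k' : ℕ} (h : k ≤ k') :
    restrict η k <+: restrict η k' := by
  rw [← restrict_take η h]; exact List.take_prefix _ _

def extBranch (ν : List Bool) : ℕ → Bool := fun i => ν.getD i false

lemma restrict_extBranch {ν : List Bool} {k : ℕ} (h : k ≤ ν.length) :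
    restrict (extBranch ν) k = ν.take k := by
  apply List.ext_getElem
  · simp [h]
  · intro i h1 h2
    simp only [restrict, extBranch, List.getElem_ofFn, List.getElem_take]
    exact List.getD_eq_getElem _ _ (by simp at h2 ⊢; omega)

lemma restrict_extBranch_self (ν : List Bool) : restrict (extBranch ν) ν.length = ν := by
  rw [restrict_extBranch le_rfl, List.take_length]

section Helpers

variable {P : Type} [PartialOrder P]

lemma pcompat_of_le {p q x : P} (h1 : p ≤ x) (h2 : q ≤ x) : PCompat (· ≤ ·) p q := ⟨x, h1, h2⟩

lemma pcompat_self (p : P) : PCompat (· ≤ ·) p p := ⟨p, le_rfl, le_rfl⟩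

lemma pcompat_mono_s11 {p p' q : P} (h : p' ≤ p) (hc : PCompat (· ≤ ·) p q) :
    PCompat (· ≤ ·) p' q := by
  obtain ⟨x, h1, h2⟩ := hc; exact ⟨x, h.trans h1, h2⟩

lemma pcompat_symm_s11 {p q : P} (hc : PCompat (· ≤ ·) p q) : PCompat (· ≤ ·) q p := by
  obtain ⟨x, h1, h2⟩ := hc; exact ⟨x, h2, h1⟩

lemma RCond.le_refl {S : Set P} (r : RCond P S) : RCond.le r r := by
  refine ⟨fun p ν h => h, Finset.Subset.refl _, ?_⟩
  intro q hq p ν hp hc hmax η hη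
  refine ⟨ν.length, ?_⟩
  rw [hη]
  exact ⟨p, hp, le_rfl, hc, fun p₂ hn hle hne hcc => hmax ⟨p₂, hn, hle, hne, hcc⟩⟩

lemma RCond.le_trans {S : Set P} {r s u : RCond P S} (h1 : RCond.le r s) (h2 : RCond.le s u) :
    RCond.le r u := by
  obtain ⟨e1, w1, f1⟩ := h1
  obtain ⟨e2, w2, f2⟩ := h2
  refine ⟨fun p ν h => e2 p ν (e1 p ν h), w1.trans w2, ?_⟩
  intro q hq p ν hp hc hmax η hη
  obtain ⟨k, hk⟩ := f1 q hq p ν hp hc hmax η hη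
  obtain ⟨p₁, hp₁, hle₁, hc₁, hmax₁⟩ := hk
  have hfront := f2 q (w1 hq) p₁ (restrict η k) hp₁ hc₁
    (fun ⟨p', hn, hle, hne, hcc⟩ => hmax₁ p' hn hle hne hcc) η
    (by rw [restrict_length])
  obtain ⟨k', p₂, hp₂, hle₂, hc₂, hmax₂⟩ := hfront
  exact ⟨k', p₂, hp₂, hle₁.trans hle₂, hc₂, hmax₂⟩

end Helpers

section Construction

variable {P : Type} [PartialOrder P]

/-- Extend a condition so that it decides each element of a finite set: either above it,
or incompatible with it. -/
lemma exists_deciding (hsep : Separative P) (W : Finset P) (x₀ : P) :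
    ∃ x : P, x₀ ≤ x ∧ ∀ q' ∈ W, q' ≤ x ∨ ¬ PCompat (· ≤ ·) q' x := by
  classical
  induction W using Finset.induction_on with
  | empty => exact ⟨x₀, le_rfl, by simp⟩
  | @insert q' W' hq ih =>
    obtain ⟨x, hx₀, hx⟩ := ih
    by_cases hle : q' ≤ x
    · exact ⟨x, hx₀, fun q'' hq'' => by
        rcases Finset.mem_insert.mp hq'' with h | h
        · exact Or.inl (h ▸ hle)
        · exact hx q'' h⟩
    · obtain ⟨y, hxy, hy⟩ := hsep q' x hle
      refine ⟨y, hx₀.trans hxy, fun q'' hq'' => ?_⟩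
      rcases Finset.mem_insert.mp hq'' with h | h
      · exact Or.inr (h ▸ hy)
      · rcases hx q'' h with h' | h'
        · exact Or.inl (h'.trans hxy)
        · exact Or.inr (fun ⟨u, hu1, hu2⟩ => h' ⟨u, hu1, hxy.trans hu2⟩)

/-- A family of pairwise incompatible extensions indexed by binary sequences of length `n`. -/
lemma exists_splitting (hatomless : Atomless P) (n : ℕ) (x : P) :
    ∃ f : List Bool → P, (∀ l : List Bool, l.length = n → x ≤ f l) ∧
      (∀ l l' : List Bool, l.length = n → l'.length = n → l ≠ l' →
        ¬ PCompat (· ≤ ·) (f l) (f l')) := by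
  induction n generalizing x with
  | zero =>
    refine ⟨fun _ => x, fun _ _ => le_rfl, fun l l' hl hl' hne => ?_⟩
    exact absurd (List.length_eq_zero_iff.mp hl ▸ List.length_eq_zero_iff.mp hl' ▸ rfl) hne
  | succ n ih =>
    obtain ⟨x₁, x₂, hx₁, hx₂, hinc⟩ := hatomless x
    obtain ⟨f₁, hf₁le, hf₁⟩ := ih x₁
    obtain ⟨f₂, hf₂le, hf₂⟩ := ih x₂
    refine ⟨fun l => match l with
      | [] => x
      | (b :: l') => if b then f₁ l' else f₂ l', ?_, ?_⟩
    · rintro (_ | ⟨b, l⟩) hl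
      · simp at hl
      · cases b
        · exact hx₂.trans (hf₂le l (by simpa using hl))
        · exact hx₁.trans (hf₁le l (by simpa using hl))
    · rintro (_ | ⟨b, l⟩) (_ | ⟨b', l'⟩) hl hl' hne
      · simp at hl
      · simp at hl
      · simp at hl'
      have hln : l.length = n := by simpa using hl
      have hln' : l'.length = n := by simpa using hl'
      cases b <;> cases b' <;> simp only [if_true, if_false, Bool.false_eq_true]
      · exact hf₂ l l' hln hln' (fun h => hne (by rw [h]))
      · rintro ⟨u, hu1, hu2⟩
        exact hinc ⟨u, (hf₁le l' hln').trans hu2, (hf₂le l hln).trans hu1⟩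
      · rintro ⟨u, hu1, hu2⟩
        exact hinc ⟨u, (hf₁le l hln).trans hu1, (hf₂le l' hln').trans hu2⟩
      · exact hf₁ l l' hln hln' (fun h => hne (by rw [h]))

end Construction

section OneStep

variable {P : Type} [PartialOrder P]

lemma one_step (hsep : Separative P) (hatomless : Atomless P)
    (s : RCond P Set.univ) (q p : P) (ν₀ ν : List Bool) (m : ℕ)
    (hfront : FrontAbove {μ : List Bool | ∃ p₁ : P, s.h p₁ = some μ ∧ p ≤ p₁ ∧
        PCompat (· ≤ ·) p₁ q ∧ ∀ p₂ : P, s.h p₂ ≠ none → p₁ ≤ p₂ → p₁ ≠ p₂ →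
          ¬ PCompat (· ≤ ·) p₂ q} ν₀)
    (hν₀ : ν₀ <+: ν) (hνm : ν.length = m) :
    ∃ s' : RCond P Set.univ, RCond.le s s' ∧
      ∃ (p'' : P) (μ : List Bool), s'.h p'' = some μ ∧ p ≤ p'' ∧
        PCompat (· ≤ ·) p'' q ∧ ν <+: μ := by
  classical
  set η := extBranch ν with hηdef
  have hη₀ : restrict η ν₀.length = ν₀ := by
    rw [hηdef, restrict_extBranch hν₀.length_le]
    exact (List.prefix_iff_eq_take.mp hν₀).symm
  obtain ⟨k, p₁, hp₁, hpp₁, hc₁, hmax₁⟩ := hfront η hη₀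
  by_cases hkm : m ≤ k
  · refine ⟨s, RCond.le_refl s, p₁, restrict η k, hp₁, hpp₁, hc₁, ?_⟩
    have hm : restrict η m = ν := by rw [← hνm, hηdef]; exact restrict_extBranch_self ν
    rw [← hm]
    exact restrict_prefix η hkm
  push_neg at hkm
  have hkν : restrict η k = ν.take k := by rw [hηdef]; exact restrict_extBranch (by omega)
  rw [hkν] at hp₁
  obtain ⟨t, hp₁t, hqt⟩ := hc₁
  obtain ⟨x, htx, hxdec⟩ := exists_deciding hsep s.w t
  obtain ⟨f, hfle, hfinc⟩ := exists_splitting hatomless (m - k) x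
  have hxle : p₁ ≤ x := hp₁t.trans htx
  -- every old domain element compatible with `t` lies below `p₁`
  have hcomp_t : ∀ p₂ : P, s.h p₂ ≠ none → PCompat (· ≤ ·) p₂ t → p₂ ≤ p₁ := by
    rintro p₂ hn ⟨u, hu1, hu2⟩
    rcases s.dom_comparable p₂ p₁ hn (by rw [hp₁]; simp) ⟨u, hu1, hp₁t.trans hu2⟩ with h | h
    · exact h
    · by_cases he : p₁ = p₂
      · exact he ▸ le_rfl
      · exact absurd ⟨u, hu1, hqt.trans hu2⟩ (hmax₁ p₂ hn h he)
  have hcomp_leaf : ∀ (p₂ : P) (l : List Bool), l.length = m - k → s.h p₂ ≠ none →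
      PCompat (· ≤ ·) p₂ (f l) → p₂ ≤ p₁ := by
    rintro p₂ l hl hn ⟨u, hu1, hu2⟩
    exact hcomp_t p₂ hn ⟨u, hu1, (htx.trans (hfle l hl)).trans hu2⟩
  -- leaves are not in the old domain
  have hleafdom : ∀ l : List Bool, l.length = m - k → s.h (f l) = none := by
    intro l hl
    by_contra hne
    have h1 : f l ≤ p₁ :=
      hcomp_t (f l) hne ⟨f l, le_rfl, htx.trans (hfle l hl)⟩
    have hfx : f l = x := le_antisymm (h1.trans hxle) (hfle l hl)
    obtain ⟨b, tl, rfl⟩ : ∃ b tl, l = b :: tl := by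
      cases l with
      | nil => exfalso; simp at hl; omega
      | cons b tl => exact ⟨b, tl, rfl⟩
    have hne' : (!b) :: tl ≠ b :: tl := by simp
    have hlen' : ((!b) :: tl).length = m - k := by simpa using hl
    exact hfinc _ _ hlen' hl hne'
      ⟨f ((!b) :: tl), le_rfl, by rw [hfx]; exact hfle _ hlen'⟩
  -- the new partial function
  set IsLeaf : P → Prop := fun y => ∃ l : List Bool, l.length = m - k ∧ f l = y with hIsLeaf
  set h' : P → Option (List Bool) := fun y =>
    if hy : IsLeaf y then some (ν.take k ++ Classical.choose hy) else s.h y with hh'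
  have hchoose : ∀ (l : List Bool), l.length = m - k → h' (f l) = some (ν.take k ++ l) := by
    intro l hl
    have hy : IsLeaf (f l) := ⟨l, hl, rfl⟩
    have hspec := Classical.choose_spec hy
    have hcl : Classical.choose hy = l := by
      by_contra he
      exact hfinc _ l hspec.1 hl he ⟨f l, le_of_eq hspec.2, le_rfl⟩
    show dite _ _ _ = _
    rw [dif_pos hy, hcl]
  have hold : ∀ y : P, ¬ IsLeaf y → h' y = s.h y := fun y hl => dif_neg hl
  have hnotleaf : ∀ y : P, s.h y ≠ none → h' y = s.h y := by
    intro y hy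
    refine hold y ?_
    rintro ⟨l, hl, rfl⟩
    exact hy (hleafdom l hl)
  have hcases : ∀ (y : P) (μ : List Bool), h' y = some μ →
      s.h y = some μ ∨ ∃ l : List Bool, l.length = m - k ∧ f l = y ∧ μ = ν.take k ++ l := by
    intro y μ hy
    by_cases hl : IsLeaf y
    · obtain ⟨l, hll, rfl⟩ := hl
      right
      refine ⟨l, hll, rfl, ?_⟩
      rw [hchoose l hll] at hy
      exact (Option.some_injective _ hy).symm
    · rw [hold y hl] at hy
      exact Or.inl hy
  have hne_none : ∀ y : P, s.h y ≠ none → h' y ≠ none := by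
    intro y hy; rw [hnotleaf y hy]; exact hy
  -- old element below a leaf
  have hold_below : ∀ (p₂ : P) (l : List Bool), l.length = m - k → s.h p₂ ≠ none →
      p₂ ≤ f l → p₂ ≤ p₁ := by
    intro p₂ l hl hn hle
    exact hcomp_leaf p₂ l hl hn ⟨f l, hle, le_rfl⟩
  -- the new condition
  refine ⟨⟨h', s.w, ?_, fun _ _ => trivial, ?_, ?_⟩, ⟨?_, Finset.Subset.refl _, ?_⟩, ?_⟩
  · -- dom_finite
    refine Set.Finite.subset (s.dom_finite.union
      ((List.finite_length_eq Bool (m - k)).image f)) ?_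
    intro y hy
    by_cases hl : IsLeaf y
    · obtain ⟨l, hll, rfl⟩ := hl
      exact Or.inr ⟨l, hll, rfl⟩
    · left
      rw [Set.mem_setOf_eq, ← hold y hl]
      exact hy
  · -- dom_comparable
    intro p₂ p₃ h2 h3 hc
    have h2a : h' p₂ ≠ none := h2
    have h3a : h' p₃ ≠ none := h3
    by_cases hl2 : IsLeaf p₂ <;> by_cases hl3 : IsLeaf p₃
    · obtain ⟨l, hll, rfl⟩ := hl2
      obtain ⟨l', hll', rfl⟩ := hl3
      by_cases he : l = l'
      · subst he; exact Or.inl le_rfl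
      · exact absurd hc (hfinc l l' hll hll' he)
    · obtain ⟨l, hll, rfl⟩ := hl2
      have h3' : s.h p₃ ≠ none := fun hn => h3a ((hold p₃ hl3).trans hn)
      exact Or.inr ((hcomp_leaf p₃ l hll h3' (pcompat_symm_s11 hc)).trans
        (hxle.trans (hfle l hll)))
    · obtain ⟨l, hll, rfl⟩ := hl3
      have h2' : s.h p₂ ≠ none := fun hn => h2a ((hold p₂ hl2).trans hn)
      exact Or.inl ((hcomp_leaf p₂ l hll h2' hc).trans (hxle.trans (hfle l hll)))
    · have h2' : s.h p₂ ≠ none := fun hn => h2a ((hold p₂ hl2).trans hn)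
      have h3' : s.h p₃ ≠ none := fun hn => h3a ((hold p₃ hl3).trans hn)
      exact s.dom_comparable p₂ p₃ h2' h3' hc
  · -- mono
    intro p₂ p₃ μ₂ μ₃ h2 h3 hle
    rcases hcases p₂ μ₂ h2 with h2' | ⟨l, hll, rfl, rfl⟩ <;>
      rcases hcases p₃ μ₃ h3 with h3' | ⟨l', hll', hfl', rfl⟩
    · exact s.mono p₂ p₃ μ₂ μ₃ h2' h3' hle
    · subst hfl'
      have hp₂p₁ : p₂ ≤ p₁ := hold_below p₂ l' hll' (by rw [h2']; simp) hle
      have : μ₂ <+: ν.take k := s.mono p₂ p₁ μ₂ (ν.take k) h2' hp₁ hp₂p₁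
      exact this.trans (List.prefix_append _ _)
    · -- leaf below an old element: impossible
      exfalso
      have hp₃p₁ : p₃ ≤ p₁ := hcomp_leaf p₃ l hll (by rw [h3']; simp) ⟨p₃, le_rfl, hle⟩
      have : p₃ = f l := le_antisymm (hp₃p₁.trans (hxle.trans (hfle l hll))) hle
      rw [this, hleafdom l hll] at h3'
      exact Option.some_ne_none _ h3'.symm
    · subst hfl'
      by_cases he : l = l'
      · subst he; exact List.prefix_refl _
      · exact absurd ⟨f l', hle, le_rfl⟩ (hfinc l l' hll hll' he)
  · -- h extends
    intro p' ν' hp'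
    show h' p' = some ν'
    rw [hnotleaf p' (by rw [hp']; simp)]
    exact hp'
  · -- fronts
    intro q'' hq'' p' νp' hp' hcp' hmax' η' hη'
    have hp'none : s.h p' ≠ none := by rw [hp']; simp
    rcases hxdec q'' hq'' with hqx | hqx
    · -- q'' ≤ x
      by_cases hpp₁' : p' ≤ p₁
      · have hp'p₁ : p' = p₁ := by
          by_contra hne
          exact hmax' ⟨p₁, by rw [hp₁]; simp, hpp₁', hne, ⟨x, hxle, hqx⟩⟩
        subst hp'p₁
        have hνp' : νp' = ν.take k := by
          have := hp₁.symm.trans hp'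
          exact (Option.some_injective _ this).symm
        have hνp'len : νp'.length = k := by
          rw [hνp', List.length_take, hνm]; omega
        refine ⟨m, ?_⟩
        set l' : List Bool := (restrict η' m).drop k with hl'def
        have hl'len : l'.length = m - k := by rw [hl'def]; simp
        have hη'' : restrict η' k = ν.take k := by
          rw [hνp'len] at hη'
          rw [hη', hνp']
        have hsplit : restrict η' m = ν.take k ++ l' := by
          have h1 := List.take_append_drop k (restrict η' m)
          rw [restrict_take η' (le_of_lt hkm), hη''] at h1
          exact h1.symm
        refine ⟨f l', ?_, hxle.trans (hfle l' hl'len), ⟨f l', le_rfl, hqx.trans (hfle l' hl'len)⟩, ?_⟩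
        · show h' (f l') = some (restrict η' m)
          rw [hchoose l' hl'len, hsplit]
        · -- maximality of the leaf
          intro p₂ h2 hle hne
          rcases Option.ne_none_iff_exists'.mp h2 with ⟨μ₂, hμ₂⟩
          rcases hcases p₂ μ₂ hμ₂ with h2' | ⟨l'', hll'', hfl'', _⟩
          · exfalso
            have hp₂p' : p₂ ≤ p' := hcomp_leaf p₂ l' hl'len (by rw [h2']; simp) ⟨p₂, le_rfl, hle⟩
            exact hne (le_antisymm hle (hp₂p'.trans (hxle.trans (hfle l' hl'len))))
          · subst hfl''
            exfalso
            by_cases he : l' = l''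
            · exact hne (he ▸ rfl)
            · exact hfinc l' l'' hl'len hll'' he ⟨f l'', hle, le_rfl⟩
      · -- p' incompatible with every leaf; p' stays maximal
        refine ⟨νp'.length, ?_⟩
        rw [hη']
        refine ⟨p', by show h' p' = some νp'; rw [hnotleaf p' hp'none]; exact hp',
          le_rfl, hcp', ?_⟩
        intro p₂ h2 hle hne
        rcases Option.ne_none_iff_exists'.mp h2 with ⟨μ₂, hμ₂⟩
        rcases hcases p₂ μ₂ hμ₂ with h2' | ⟨l'', hll'', hfl'', _⟩
        · exact fun hcc => hmax' ⟨p₂, by rw [h2']; simp, hle, hne, hcc⟩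
        · subst hfl''
          exact fun _ => absurd (hcomp_leaf p' l'' hll'' hp'none ⟨f l'', hle, le_rfl⟩) hpp₁'
    · -- x incompatible with q'': leaves incompatible with q''; p' stays maximal
      refine ⟨νp'.length, ?_⟩
      rw [hη']
      refine ⟨p', by show h' p' = some νp'; rw [hnotleaf p' hp'none]; exact hp',
        le_rfl, hcp', ?_⟩
      intro p₂ h2 hle hne
      rcases Option.ne_none_iff_exists'.mp h2 with ⟨μ₂, hμ₂⟩
      rcases hcases p₂ μ₂ hμ₂ with h2' | ⟨l'', hll'', hfl'', _⟩
      · exact fun hcc => hmax' ⟨p₂, by rw [h2']; simp, hle, hne, hcc⟩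
      · subst hfl''
        rintro ⟨u, hu1, hu2⟩
        exact hqx ⟨u, hu2, ((hfle l'' hll'').trans hu1 : x ≤ u)⟩
  · -- the witness
    have hl₀ : (ν.drop k).length = m - k := by simp [hνm]
    refine ⟨f (ν.drop k), ν, ?_, hpp₁.trans (hxle.trans (hfle _ hl₀)),
      ⟨f (ν.drop k), le_rfl, (hqt.trans htx).trans (hfle _ hl₀)⟩, List.prefix_refl _⟩
    show h' (f (ν.drop k)) = some ν
    rw [hchoose _ hl₀, List.take_append_drop]

end OneStep

section Iterate

/-- All binary lists of a given length. -/
def allLists : ℕ → List (List Bool)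
  | 0 => [[]]
  | (n + 1) => (allLists n).flatMap (fun l => [true :: l, false :: l])

lemma mem_allLists : ∀ (n : ℕ) (l : List Bool), l ∈ allLists n ↔ l.length = n := by
  intro n
  induction n with
  | zero => intro l; simp [allLists, List.length_eq_zero_iff]
  | succ n ih =>
    intro l
    simp only [allLists, List.mem_flatMap, List.mem_cons, List.mem_singleton]
    constructor
    · rintro ⟨l', hl', (rfl | (rfl | h))⟩
      · simp [(ih l').mp hl']
      · simp [(ih l').mp hl']
      · simp at h
    · intro hl
      cases l with
      | nil => simp at hl
      | cons b tl =>
        refine ⟨tl, (ih tl).mpr (by simpa using hl), ?_⟩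
        cases b
        · right; left; rfl
        · left; rfl

variable {P : Type} [PartialOrder P]

lemma iter_step (hsep : Separative P) (hatomless : Atomless P)
    (r₀ : RCond P Set.univ) (m : ℕ) (L : List (P × P × List Bool)) :
    ∀ s : RCond P Set.univ, RCond.le r₀ s →
      ∃ s' : RCond P Set.univ, RCond.le s s' ∧
        ∀ e ∈ L, ∀ ν₀ : List Bool,
          e.1 ∈ r₀.w → r₀.h e.2.1 = some ν₀ → PCompat (· ≤ ·) e.2.1 e.1 →
          (¬ ∃ p' : P, r₀.h p' ≠ none ∧ e.2.1 ≤ p' ∧ e.2.1 ≠ p' ∧ PCompat (· ≤ ·) p' e.1) →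
          e.2.2.length = m → ν₀ <+: e.2.2 →
          ∃ (p'' : P) (μ : List Bool), s'.h p'' = some μ ∧ e.2.1 ≤ p'' ∧
            PCompat (· ≤ ·) p'' e.1 ∧ e.2.2 <+: μ := by
  classical
  induction L with
  | nil => intro s hs; exact ⟨s, RCond.le_refl s, by simp⟩
  | cons e L ih =>
    intro s hs
    by_cases he : ∃ ν₀ : List Bool, e.1 ∈ r₀.w ∧ r₀.h e.2.1 = some ν₀ ∧
        PCompat (· ≤ ·) e.2.1 e.1 ∧
        (¬ ∃ p' : P, r₀.h p' ≠ none ∧ e.2.1 ≤ p' ∧ e.2.1 ≠ p' ∧ PCompat (· ≤ ·) p' e.1) ∧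
        e.2.2.length = m ∧ ν₀ <+: e.2.2
    · obtain ⟨ν₀, hw, hh, hcq, hmax, hlen, hpre⟩ := he
      have hfront := hs.2.2 e.1 hw e.2.1 ν₀ hh hcq hmax
      obtain ⟨s₁, hs₁, p'', μ, hμ, hle'', hc'', hpre''⟩ :=
        one_step hsep hatomless s e.1 e.2.1 ν₀ e.2.2 m hfront hpre hlen
      obtain ⟨s', hs'1, hs'3⟩ := ih s₁ (RCond.le_trans hs hs₁)
      refine ⟨s', RCond.le_trans hs₁ hs'1, ?_⟩
      intro e' he' ν₀' hw' hh' hcq' hmax' hlen' hpre'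
      rcases List.mem_cons.mp he' with rfl | he'
      · exact ⟨p'', μ, hs'1.1 p'' μ hμ, hle'', hc'', hpre''⟩
      · exact hs'3 e' he' ν₀' hw' hh' hcq' hmax' hlen' hpre'
    · obtain ⟨s', hs'1, hs'3⟩ := ih s hs
      refine ⟨s', hs'1, ?_⟩
      intro e' he' ν₀' hw' hh' hcq' hmax' hlen' hpre'
      rcases List.mem_cons.mp he' with rfl | he'
      · exact absurd ⟨ν₀', hw', hh', hcq', hmax', hlen', hpre'⟩ he
      · exact hs'3 e' he' ν₀' hw' hh' hcq' hmax' hlen' hpre'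

end Iterate

/-- For a separative atomless poset `P`, a condition `r₀ = ⟨h₀,w₀⟩` of `R_P(P)` and `m ∈ ω`,
the set `I²_{r₀,m}` is dense in `R_P(P)`: it consists of those `r = ⟨h,w⟩` which are either
incompatible with `r₀`, or such that for every `q ∈ w₀`, every `p ∈ dom h₀` compatible with
`q` and maximal (in `dom h₀`) with that property, and every `ν ∈ 2^m` extending `h₀(p)`,
there is `p″ ∈ dom h` with `p ≤ p″`, `p″` compatible with `q` and `ν ⊆ h(p″)`. -/
theorem rcond_I2_dense (P : Type) [PartialOrder P]
    (hsep : Separative P) (hatomless : Atomless P)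
    (r₀ : RCond P Set.univ) (m : ℕ) :
    PDense (RCond.le (P := P) (S := Set.univ))
      {r : RCond P Set.univ |
        ¬ PCompat (RCond.le (P := P) (S := Set.univ)) r r₀ ∨
        ∀ q ∈ r₀.w, ∀ (p : P) (ν₀ : List Bool), r₀.h p = some ν₀ →
          PCompat (· ≤ ·) p q →
          (¬ ∃ p' : P, r₀.h p' ≠ none ∧ p ≤ p' ∧ p ≠ p' ∧ PCompat (· ≤ ·) p' q) →
          ∀ ν : List Bool, ν.length = m → ν₀ <+: ν →
            ∃ (p'' : P) (μ : List Bool), r.h p'' = some μ ∧ p ≤ p'' ∧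
              PCompat (· ≤ ·) p'' q ∧ ν <+: μ} := by
  classical
  intro r
  by_cases hc : PCompat (RCond.le (P := P) (S := Set.univ)) r r₀
  · obtain ⟨s, hrs, hr₀s⟩ := hc
    set L : List (P × P × List Bool) :=
      r₀.w.toList.flatMap (fun q =>
        r₀.dom_finite.toFinset.toList.flatMap (fun p =>
          (allLists m).map (fun ν => (q, p, ν)))) with hL
    obtain ⟨s', h1, h3⟩ := iter_step hsep hatomless r₀ m L s hr₀s
    refine ⟨s', Or.inr ?_, RCond.le_trans hrs h1⟩
    intro q hq p ν₀ hh hcpq hmax ν hlen hpre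
    have hmem : (q, p, ν) ∈ L := by
      rw [hL]
      simp only [List.mem_flatMap, List.mem_map]
      exact ⟨q, Finset.mem_toList.mpr hq, p,
        by simp [Set.Finite.mem_toFinset, Set.mem_setOf_eq, hh],
        ⟨ν, (mem_allLists m ν).mpr hlen, rfl⟩⟩
    exact h3 (q, p, ν) hmem ν₀ hq hh hcpq hmax hlen hpre
  · exact ⟨r, Or.inl hc, RCond.le_refl r⟩
end
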